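/- Let G = (V,E) be a Δ-regular graph with spectral expansion λ(G) ≤ λ where λ < δ/16 for some δ > 0. Suppose S, T ⊆ V satisfy |S| ≤ λ|V|, |T| ≤ |S|/2, and every vertex v ∈ S \ T has W_G(v, S) ≥ δΔ/4. Then S is empty. Equivalently: if S is nonempty with |S| ≤ λ|V| and |T| ≤ |S|/2, then there exists v ∈ S \ T with W_G(v, S) < δΔ/4. -/

import Mathlib

set_option maxHeartbeats 800000
open Matrix Finset


/-- let `G` be a `Δ`-regular multigraph (multiplicities `W`, normalized
adjacency matrix `A`) with spectral expansion `λ(G) ≤ lam` (all eigenvalues except one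
copy of the top eigenvalue `1` are at most `lam` in absolute value, `0 ≤ lam`), where
`lam < δ/16`. If `S, T ⊆ V` satisfy `|S| ≤ lam·|V|`, `|T| ≤ |S|/2`, and every
`v ∈ S \ T` has `W(v,S) ≥ δΔ/4`, then `S` is empty. -/
theorem stmt18 {V : Type} [Fintype V] [DecidableEq V] (Δ : ℕ) (hΔ : 0 < Δ)
    (W : V → V → ℕ) (hsym : ∀ i j, W i j = W j i) (hreg : ∀ i, ∑ j, W i j = Δ)
    (A : Matrix V V ℝ) (hA : ∀ i j, A i j = (W i j : ℝ) / Δ)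
    (hHerm : A.IsHermitian) (lam δ : ℝ) (hlam0 : 0 ≤ lam) (hδ : 0 < δ)
    (hlam : ∃ i₀, hHerm.eigenvalues i₀ = 1 ∧ ∀ i, i ≠ i₀ → |hHerm.eigenvalues i| ≤ lam)
    (hlamδ : lam < δ / 16)
    (S T : Finset V)
    (hS : (S.card : ℝ) ≤ lam * Fintype.card V)
    (hT : (T.card : ℝ) ≤ (S.card : ℝ) / 2)
    (hdeg : ∀ v ∈ S \ T, δ * Δ / 4 ≤ ∑ u ∈ S, (W v u : ℝ)) :
    S = ∅ := by
  by_contra hne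
  obtain ⟨i₀, hi₀, hother⟩ := hlam
  set B := hHerm.eigenvectorBasis with hB
  set ev := hHerm.eigenvalues with hev
  have hΔR : (0:ℝ) < Δ := by exact_mod_cast hΔ
  have hScard : 0 < S.card := Finset.card_pos.2 (Finset.nonempty_iff_ne_empty.2 hne)
  have hsR : (0:ℝ) < S.card := by exact_mod_cast hScard
  -- S \ T has at least |S|/2 elements
  have hsd : (S.card : ℝ) / 2 ≤ ((S \ T).card : ℝ) := by
    have := Finset.card_le_card_sdiff_add_card (s := S) (t := T)
    have : (S.card : ℝ) ≤ (S \ T).card + T.card := by exact_mod_cast this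
    linarith
  have hsdpos : 0 < (S \ T).card := by
    have : (0:ℝ) < ((S \ T).card : ℝ) := by linarith
    exact_mod_cast this
  -- δ ≤ 4
  have hδ4 : δ ≤ 4 := by
    obtain ⟨v, hv⟩ := Finset.card_pos.1 hsdpos
    have h1 := hdeg v hv
    have h2 : ∑ u ∈ S, (W v u : ℝ) ≤ ∑ u, (W v u : ℝ) := by
      apply Finset.sum_le_sum_of_subset_of_nonneg (Finset.subset_univ S)
      intros; positivity
    have h3 : ∑ u, (W v u : ℝ) = Δ := by exact_mod_cast hreg v
    nlinarith
  have hlam1 : lam < 1 := by linarith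
  -- vectors
  set x : EuclideanSpace ℝ V := WithLp.toLp 2 (fun v => if v ∈ S then (1:ℝ) else 0) with hx
  set o : EuclideanSpace ℝ V := WithLp.toLp 2 (fun _ => (1:ℝ)) with ho
  have hinner : ∀ a b : EuclideanSpace ℝ V, (inner ℝ a b : ℝ) = ∑ v, a v * b v := by
    intro a b; simp [PiLp.inner_apply, RCLike.inner_apply]; exact Finset.sum_congr rfl (fun _ _ => mul_comm _ _)
  -- A *ᵥ o = o
  have hAo : A *ᵥ (o : V → ℝ) = o := by
    funext i
    simp only [mulVec, dotProduct, ho, mul_one, hA]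
    rw [← Finset.sum_div]
    rw [show ∑ j, (W i j : ℝ) = Δ by exact_mod_cast hreg i]
    field_simp
  -- symmetric action
  have hAsymm : ∀ (y : EuclideanSpace ℝ V) (i : V),
      (inner ℝ (B i) (WithLp.toLp 2 (A *ᵥ (y : V → ℝ)) : EuclideanSpace ℝ V) : ℝ)
        = ev i * inner ℝ (B i) y := by
    intro y i
    rw [hinner, hinner]
    have hs : ∀ v u, A v u = A u v := fun v u => by rw [hA, hA, hsym]
    have : ∑ v, (B i) v * (A *ᵥ (y : V → ℝ)) v = ∑ v, (A *ᵥ ⇑(B i)) v * y v := by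
      simp only [mulVec, dotProduct, Finset.mul_sum, Finset.sum_mul]
      rw [Finset.sum_comm]
      apply Finset.sum_congr rfl; intro v _
      apply Finset.sum_congr rfl; intro u _
      rw [hs u v]
      show B i u * (A v u * y v) = A v u * B i u * y v
      ring
    rw [this, hHerm.mulVec_eigenvectorBasis i]
    simp [Finset.mul_sum, mul_assoc]; rfl
  -- repr of o vanishes off i₀
  have hrepro : ∀ i, i ≠ i₀ → (inner ℝ (B i) o : ℝ) = 0 := by
    intro i hi
    have h1 := hAsymm o i
    rw [hAo, WithLp.toLp_ofLp] at h1
    have h2 : |ev i| ≤ lam := hother i hi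
    have h3 : (ev i - 1) * (inner ℝ (B i) o : ℝ) = 0 := by linarith
    have hne1 : ev i - 1 ≠ 0 := by
      have := (abs_le.1 h2).2; intro h; linarith
    exact (mul_eq_zero.1 h3).resolve_left hne1
  -- inner products via repr
  have hrepr : ∀ a b : EuclideanSpace ℝ V,
      (inner ℝ a b : ℝ) = ∑ i, (inner ℝ (B i) a : ℝ) * (inner ℝ (B i) b : ℝ) := by
    intro a b
    have h := B.repr.inner_map_map a b
    rw [← h, hinner]
    apply Finset.sum_congr rfl
    intro i _
    rw [B.repr_apply_apply a i, B.repr_apply_apply b i]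
  -- basic inner products
  have hxo : (inner ℝ x o : ℝ) = S.card := by
    rw [hinner]
    simp [hx, ho]
  have hoo : (inner ℝ o o : ℝ) = Fintype.card V := by
    rw [hinner]; simp [ho]
  have hxx : (inner ℝ x x : ℝ) = S.card := by
    rw [hinner]
    have : ∀ v : V, x v * x v = if v ∈ S then (1:ℝ) else 0 := by
      intro v; simp only [hx]; split <;> simp
    simp [this]
  set c : V → ℝ := fun i => (inner ℝ (B i) x : ℝ) with hc
  set d : V → ℝ := fun i => (inner ℝ (B i) o : ℝ) with hd
  set q : ℝ := (inner ℝ x (WithLp.toLp 2 (A *ᵥ (x : V → ℝ)) : EuclideanSpace ℝ V) : ℝ) with hq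
  set n : ℝ := (Fintype.card V : ℝ) with hn
  set s : ℝ := (S.card : ℝ) with hs'
  have hn0 : 0 < n := by
    have h : 0 < Fintype.card V := Fintype.card_pos_iff.2 ⟨(Finset.card_pos.1 hScard).choose⟩
    rw [hn]; exact_mod_cast h
  -- q as eigenvalue sum
  have hq1 : q = ∑ i, ev i * (c i)^2 := by
    rw [hq, hrepr]
    apply Finset.sum_congr rfl
    intro i _
    rw [hAsymm x i]
    simp only [hc]; ring
  -- inner x o via eigencoordinates
  have hxo2 : s = c i₀ * d i₀ := by
    rw [← hxo, hrepr x o]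
    exact Finset.sum_eq_single_of_mem i₀ (Finset.mem_univ i₀)
      (fun i _ hi => by rw [hrepro i hi, mul_zero])
  have hoo2 : n = d i₀ ^ 2 := by
    rw [← hoo, hrepr o o, Finset.sum_eq_single_of_mem i₀ (Finset.mem_univ i₀)
      (fun i _ hi => by rw [hrepro i hi, mul_zero])]
    ring
  have hci₀ : c i₀ ^ 2 * n = s ^ 2 := by
    rw [hoo2, hxo2]; ring
  have hsumc : ∑ i, (c i)^2 = s := by
    rw [← hxx, hrepr x x]
    apply Finset.sum_congr rfl
    intro i _; simp [hc]; ring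
  -- upper bound on q
  have hci₀sq : c i₀ ^ 2 ≤ lam * s := by
    have h1 : c i₀ ^ 2 = s ^ 2 / n := by
      field_simp at hci₀ ⊢; linarith
    rw [h1]
    rw [div_le_iff₀ hn0]
    nlinarith [hS]
  have hrest : ∑ i ∈ Finset.univ.erase i₀, (c i)^2 ≤ s := by
    have h1 : ∑ i ∈ Finset.univ.erase i₀, (c i)^2 ≤ ∑ i, (c i)^2 := by
      apply Finset.sum_le_sum_of_subset_of_nonneg (Finset.erase_subset _ _)
      intros; positivity
    linarith [hsumc ▸ h1]
  have hqup : q ≤ 2 * lam * s := by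
    rw [hq1, ← Finset.add_sum_erase _ _ (Finset.mem_univ i₀)]
    have h2 : ∑ i ∈ Finset.univ.erase i₀, ev i * (c i)^2
        ≤ ∑ i ∈ Finset.univ.erase i₀, lam * (c i)^2 := by
      apply Finset.sum_le_sum
      intro i hi
      have h := (abs_le.1 (hother i (Finset.ne_of_mem_erase hi))).2
      exact mul_le_mul_of_nonneg_right h (sq_nonneg _)
    have h3 : ∑ i ∈ Finset.univ.erase i₀, lam * (c i)^2 ≤ lam * s := by
      rw [← Finset.mul_sum]
      exact mul_le_mul_of_nonneg_left hrest hlam0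
    have h4 : ev i₀ * (c i₀)^2 ≤ lam * s := by rw [hi₀]; simpa using hci₀sq
    linarith
  -- q in terms of W
  have hterm : ∀ v u : V, (Δ:ℝ) * (A v u * (if u ∈ S then (1:ℝ) else 0))
      = if u ∈ S then (W v u : ℝ) else 0 := by
    intro v u; rw [hA]; split
    · rw [mul_one]; field_simp
    · ring
  have hqW : Δ * q = ∑ v ∈ S, ∑ u ∈ S, (W v u : ℝ) := by
    rw [hq, hinner]
    calc (Δ:ℝ) * ∑ v, x v * (A *ᵥ (x : V → ℝ)) v
        = ∑ v, (Δ:ℝ) * (x v * (A *ᵥ (x : V → ℝ)) v) := Finset.mul_sum _ _ _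
      _ = ∑ v, (if v ∈ S then ∑ u ∈ S, (W v u : ℝ) else 0) := by
          apply Finset.sum_congr rfl
          intro v _
          by_cases hv : v ∈ S
          · simp only [hx, hv, if_true, one_mul, mulVec, dotProduct]
            rw [Finset.mul_sum]
            rw [show ∑ u, (Δ:ℝ) * (A v u * (if u ∈ S then (1:ℝ) else 0))
                = ∑ u, (if u ∈ S then (W v u : ℝ) else 0) from
              Finset.sum_congr rfl (fun u _ => hterm v u)]
            rw [Finset.sum_ite_mem, Finset.univ_inter]
          · simp only [hx, hv, if_false, zero_mul, mul_zero]
      _ = ∑ v ∈ S, ∑ u ∈ S, (W v u : ℝ) := by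
          rw [Finset.sum_ite_mem, Finset.univ_inter]
  -- lower bound
  have hlow : s / 2 * (δ * Δ / 4) ≤ ∑ v ∈ S, ∑ u ∈ S, (W v u : ℝ) := by
    have h1 : ∑ v ∈ S \ T, ∑ u ∈ S, (W v u : ℝ) ≤ ∑ v ∈ S, ∑ u ∈ S, (W v u : ℝ) := by
      apply Finset.sum_le_sum_of_subset_of_nonneg (Finset.sdiff_subset)
      intros; positivity
    have h2 : ((S \ T).card : ℝ) * (δ * Δ / 4) ≤ ∑ v ∈ S \ T, ∑ u ∈ S, (W v u : ℝ) := by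
      calc ((S \ T).card : ℝ) * (δ * Δ / 4) = ∑ _v ∈ S \ T, δ * Δ / 4 := by
            rw [Finset.sum_const, nsmul_eq_mul]
        _ ≤ _ := Finset.sum_le_sum (fun v hv => hdeg v hv)
    have h3 : s / 2 * (δ * Δ / 4) ≤ ((S \ T).card : ℝ) * (δ * Δ / 4) := by
      apply mul_le_mul_of_nonneg_right hsd
      positivity
    linarith
  -- contradiction
  have hfin : s / 2 * (δ * Δ / 4) ≤ Δ * (2 * lam * s) := by
    calc s / 2 * (δ * Δ / 4) ≤ ∑ v ∈ S, ∑ u ∈ S, (W v u : ℝ) := hlow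
      _ = Δ * q := hqW.symm
      _ ≤ Δ * (2 * lam * s) := mul_le_mul_of_nonneg_left hqup hΔR.le
  nlinarith [mul_pos hΔR hsR]
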